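/- For every m ∈ ℤ² with m + Λ0 ⊆ Λ1, the shifted filter c_m satisfies T(f̂)·c_m = 0, i.e. every integer shift of the coefficient sequence of μ0 that fits inside Λ1 lies in the nullspace of the structured matrix T(f̂). -/

import Mathlib

open MeasureTheory

noncomputable section

/-- The complex exponential `e^{2πi k·r}` for `k ∈ ℤ²`, `r ∈ ℝ²`. -/
def efun (k : ℤ × ℤ) (r : ℝ × ℝ) : ℂ :=
  Complex.exp (2 * Real.pi * Complex.I * ((k.1 : ℝ) * r.1 + (k.2 : ℝ) * r.2 : ℝ))

/-- The unit square `[0,1]²`. -/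
def square : Set (ℝ × ℝ) := Set.Icc (0, 0) (1, 1)

/-- Fourier coefficients `f̂[k] = ∫_{[0,1]²} f(r) e^{−2πi k·r} dr`. -/
def fourierCoeff2 (f : ℝ × ℝ → ℂ) (k : ℤ × ℤ) : ℂ :=
  ∫ r in square, f r * efun (-k) r

/-- The structured (multifold weighted Toeplitz) matrix `T(ĝ)`, the vertical concatenation
of blocks `T₁, T₂` with entries `Tᵢ(ĝ)[ℓ,k] = (ℓ−k)ᵢ · ĝ[ℓ−k]`, `ℓ ∈ Λ2`, `k ∈ Λ1`. -/
def Tmat (Λ1 Λ2 : Finset (ℤ × ℤ)) (g : ℤ × ℤ → ℂ) :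
    Matrix (Fin 2 × Λ2) Λ1 ℂ := fun p k =>
  (if p.1 = 0 then (((p.2 : ℤ × ℤ) - (k : ℤ × ℤ)).1 : ℂ)
    else (((p.2 : ℤ × ℤ) - (k : ℤ × ℤ)).2 : ℂ)) * g ((p.2 : ℤ × ℤ) - (k : ℤ × ℤ))

section Aux

open Set

lemma oneD (U : Set ℝ) (hU : IsOpen U) (hb : Bornology.IsBounded U)
    (φ φ' : ℝ → ℂ) (hd : ∀ x, HasDerivAt φ (φ' x) x) (hc : Continuous φ')
    (hv : ∀ x ∈ frontier U, φ x = 0) : ∫ x in U, φ' x = 0 := by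
  obtain ⟨R, hR⟩ := hb.subset_closedBall 0
  have habs : ∀ x ∈ U, |x| ≤ R := by
    intro x hx
    have := hR hx
    rwa [Metric.mem_closedBall, Real.dist_eq, sub_zero] at this
  set A : ℝ → ℝ := fun x => sSup (Uᶜ ∩ Set.Iic x) with hA
  set B : ℝ → ℝ := fun x => sInf (Uᶜ ∩ Set.Ici x) with hB
  have hAmem : ∀ x ∈ U, A x ∈ Uᶜ ∩ Set.Iic x := by
    intro x hx
    refine (hU.isClosed_compl.inter isClosed_Iic).csSup_mem ⟨-(R+1), ?_, ?_⟩ ⟨x, fun t ht => ht.2⟩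
    · intro h
      have := habs _ h
      have hR0 : (0:ℝ) ≤ R := (abs_nonneg x).trans (habs x hx)
      rw [abs_neg, abs_of_nonneg (by linarith)] at this
      linarith
    · have := habs x hx
      have := neg_abs_le x
      simp only [Set.mem_Iic]
      linarith
  have hBmem : ∀ x ∈ U, B x ∈ Uᶜ ∩ Set.Ici x := by
    intro x hx
    refine (hU.isClosed_compl.inter isClosed_Ici).csInf_mem ⟨R+1, ?_, ?_⟩ ⟨x, fun t ht => ht.2⟩
    · intro h
      have := habs _ h
      have hR0 : (0:ℝ) ≤ R := (abs_nonneg x).trans (habs x hx)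
      rw [abs_of_nonneg (by linarith)] at this
      linarith
    · have := habs x hx
      have := le_abs_self x
      simp only [Set.mem_Ici]
      linarith
  have hAx : ∀ x ∈ U, A x < x := fun x hx =>
    lt_of_le_of_ne (hAmem x hx).2 (fun h => (hAmem x hx).1 (by rw [h]; exact hx))
  have hxB : ∀ x ∈ U, x < B x := fun x hx =>
    lt_of_le_of_ne (hBmem x hx).2 (fun h => (hBmem x hx).1 (by rw [← h]; exact hx))
  have hsub : ∀ x ∈ U, Set.Ioo (A x) (B x) ⊆ U := by
    intro x hx t ht
    by_contra htU
    rcases le_total t x with h | h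
    · exact absurd (le_csSup ⟨x, fun s hs => hs.2⟩ (Set.mem_inter (Set.mem_compl htU) (Set.mem_Iic.2 h))) (not_le.2 ht.1)
    · exact absurd (csInf_le ⟨x, fun s hs => hs.2⟩ (Set.mem_inter (Set.mem_compl htU) (Set.mem_Ici.2 h))) (not_le.2 ht.2)
  have hAfr : ∀ x ∈ U, A x ∈ frontier U := by
    intro x hx
    rw [hU.frontier_eq]
    refine ⟨?_, (hAmem x hx).1⟩
    have h1 : Set.Ioo (A x) x ⊆ U := fun t ht => hsub x hx ⟨ht.1, ht.2.trans (hxB x hx)⟩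
    have h2 : A x ∈ closure (Set.Ioo (A x) x) := by
      rw [closure_Ioo (ne_of_lt (hAx x hx))]
      exact Set.left_mem_Icc.2 (hAx x hx).le
    exact closure_mono h1 h2
  have hBfr : ∀ x ∈ U, B x ∈ frontier U := by
    intro x hx
    rw [hU.frontier_eq]
    refine ⟨?_, (hBmem x hx).1⟩
    have h1 : Set.Ioo x (B x) ⊆ U := fun t ht => hsub x hx ⟨(hAx x hx).trans ht.1, ht.2⟩
    have h2 : B x ∈ closure (Set.Ioo x (B x)) := by
      rw [closure_Ioo (ne_of_lt (hxB x hx))]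
      exact Set.right_mem_Icc.2 (hxB x hx).le
    exact closure_mono h1 h2
  have hABeq : ∀ x ∈ U, ∀ t ∈ Set.Ioo (A x) (B x), A t = A x ∧ B t = B x := by
    intro x hx t ht
    constructor
    · have hseteq : Uᶜ ∩ Set.Iic t = Uᶜ ∩ Set.Iic (A x) := by
        ext s
        simp only [Set.mem_inter_iff, Set.mem_Iic, Set.mem_compl_iff]
        constructor
        · rintro ⟨hs1, hs2⟩
          refine ⟨hs1, ?_⟩
          by_contra hlt
          push_neg at hlt
          exact hs1 (hsub x hx ⟨hlt, lt_of_le_of_lt hs2 ht.2⟩)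
        · rintro ⟨hs1, hs2⟩
          exact ⟨hs1, hs2.trans ht.1.le⟩
      show sSup _ = _
      rw [hseteq]
      exact IsGreatest.csSup_eq ⟨⟨(hAmem x hx).1, Set.mem_Iic.2 le_rfl⟩, fun s hs => hs.2⟩
    · have hseteq : Uᶜ ∩ Set.Ici t = Uᶜ ∩ Set.Ici (B x) := by
        ext s
        simp only [Set.mem_inter_iff, Set.mem_Ici, Set.mem_compl_iff]
        constructor
        · rintro ⟨hs1, hs2⟩
          refine ⟨hs1, ?_⟩
          by_contra hlt
          push_neg at hlt
          exact hs1 (hsub x hx ⟨lt_of_lt_of_le ht.1 hs2, hlt⟩)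
        · rintro ⟨hs1, hs2⟩
          exact ⟨hs1, ht.2.le.trans hs2⟩
      show sInf _ = _
      rw [hseteq]
      exact IsLeast.csInf_eq ⟨⟨(hBmem x hx).1, Set.mem_Ici.2 le_rfl⟩, fun s hs => hs.2⟩
  set V : Set (ℝ × ℝ) := (fun x => (A x, B x)) '' U with hV
  have hVne : ∀ p ∈ V, (Set.Ioo p.1 p.2).Nonempty := by
    rintro p ⟨x, hx, rfl⟩
    exact ⟨x, hAx x hx, hxB x hx⟩
  have hVpd : V.PairwiseDisjoint (fun p : ℝ × ℝ => Set.Ioo p.1 p.2) := by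
    rintro p hp q hq hpq
    obtain ⟨x, hx, rfl⟩ := hp
    obtain ⟨x', hx', rfl⟩ := hq
    rw [Function.onFun, Set.disjoint_left]
    intro t ht ht'
    have htU : t ∈ U := hsub x hx ht
    have e1 := hABeq x hx t ht
    have e2 := hABeq x' hx' t ht'
    exact hpq (show (A x, B x) = (A x', B x') by rw [← e1.1, ← e1.2, e2.1, e2.2])
  have hVcnt : V.Countable := hVpd.countable_of_isOpen (fun p _ => isOpen_Ioo) hVne
  have hUnion : U = ⋃ p : V, Set.Ioo (p : ℝ × ℝ).1 (p : ℝ × ℝ).2 := by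
    ext t
    constructor
    · intro ht
      exact Set.mem_iUnion.2 ⟨⟨(A t, B t), ⟨t, ht, rfl⟩⟩, hAx t ht, hxB t ht⟩
    · intro ht
      obtain ⟨⟨p, hp⟩, htp⟩ := Set.mem_iUnion.1 ht
      obtain ⟨x, hx, rfl⟩ := hp
      exact hsub x hx htp
  haveI := hVcnt.to_subtype
  have hint : IntegrableOn φ' U :=
    (hc.continuousOn.integrableOn_compact hb.isCompact_closure).mono_set subset_closure
  rw [hUnion]
  rw [integral_iUnion (fun p => measurableSet_Ioo) (hVpd.subtype _ _) (hUnion ▸ hint)]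
  have hterm : ∀ p : V, (∫ x in Set.Ioo (p : ℝ × ℝ).1 (p : ℝ × ℝ).2, φ' x) = 0 := by
    rintro ⟨p, hp⟩
    obtain ⟨x, hx, rfl⟩ := hp
    have hle : A x ≤ B x := ((hAx x hx).trans (hxB x hx)).le
    have := intervalIntegral.integral_eq_sub_of_hasDerivAt (f := φ) (f' := φ')
      (a := A x) (b := B x) (fun t _ => hd t) (hc.intervalIntegrable _ _)
    rw [intervalIntegral.integral_of_le hle] at this
    rw [← MeasureTheory.integral_Ioc_eq_integral_Ioo, this,
      hv _ (hAfr x hx), hv _ (hBfr x hx), sub_zero]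
  simp only [hterm, tsum_zero]

lemma twoD_fst (Ω : Set (ℝ × ℝ)) (hΩ : IsOpen Ω) (hb : Bornology.IsBounded Ω)
    (g g₁ : ℝ × ℝ → ℂ) (hd : ∀ y x, HasDerivAt (fun x => g (x, y)) (g₁ (x, y)) x)
    (hc : Continuous g₁) (hv : ∀ r ∈ frontier Ω, g r = 0) : ∫ r in Ω, g₁ r = 0 := by
  have hmeas := hΩ.measurableSet
  have hint : IntegrableOn g₁ Ω :=
    (hc.continuousOn.integrableOn_compact hb.isCompact_closure).mono_set subset_closure
  have hind : Integrable (Ω.indicator g₁) := (integrable_indicator_iff hmeas).2 hint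
  rw [← integral_indicator hmeas]
  rw [Measure.volume_eq_prod] at hind ⊢
  rw [integral_prod_symm _ hind]
  have hinner : ∀ y : ℝ, (∫ x : ℝ, Ω.indicator g₁ (x, y)) = 0 := by
    intro y
    have hcont_xy : Continuous (fun x : ℝ => (x, y)) := continuous_id.prodMk continuous_const
    have hsliceo : IsOpen {x : ℝ | (x, y) ∈ Ω} := hΩ.preimage hcont_xy
    have hsliceb : Bornology.IsBounded {x : ℝ | (x, y) ∈ Ω} := by
      obtain ⟨R, hR⟩ := hb.subset_closedBall 0
      refine (Metric.isBounded_closedBall (x := (0:ℝ)) (r := R)).subset ?_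
      intro x hx
      have h1 := hR hx
      rw [Metric.mem_closedBall] at h1 ⊢
      have h2 : dist x (0:ℝ) ≤ dist ((x, y)) ((0 : ℝ × ℝ)) := by
        rw [Prod.dist_eq]; exact le_max_left _ _
      exact h2.trans h1
    have hfr : ∀ x ∈ frontier {x : ℝ | (x, y) ∈ Ω}, g (x, y) = 0 := fun x hxf =>
      hv _ (hcont_xy.frontier_preimage_subset Ω hxf)
    have h0 := oneD _ hsliceo hsliceb (fun x => g (x, y)) (fun x => g₁ (x, y)) (hd y)
      (hc.comp hcont_xy) hfr
    have heq : (fun x : ℝ => Ω.indicator g₁ (x, y)) =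
        fun x : ℝ => ({x : ℝ | (x, y) ∈ Ω}).indicator (fun x => g₁ (x, y)) x := by
      funext x
      rfl
    rw [heq, integral_indicator hsliceo.measurableSet]
    exact h0
  exact MeasureTheory.integral_eq_zero_of_ae (Filter.Eventually.of_forall fun y => hinner y)

lemma twoD_snd (Ω : Set (ℝ × ℝ)) (hΩ : IsOpen Ω) (hb : Bornology.IsBounded Ω)
    (g g₁ : ℝ × ℝ → ℂ) (hd : ∀ x y, HasDerivAt (fun y => g (x, y)) (g₁ (x, y)) y)
    (hc : Continuous g₁) (hv : ∀ r ∈ frontier Ω, g r = 0) : ∫ r in Ω, g₁ r = 0 := by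
  have hmeas := hΩ.measurableSet
  have hint : IntegrableOn g₁ Ω :=
    (hc.continuousOn.integrableOn_compact hb.isCompact_closure).mono_set subset_closure
  have hind : Integrable (Ω.indicator g₁) := (integrable_indicator_iff hmeas).2 hint
  rw [← integral_indicator hmeas]
  rw [Measure.volume_eq_prod] at hind ⊢
  rw [integral_prod _ hind]
  have hinner : ∀ x : ℝ, (∫ y : ℝ, Ω.indicator g₁ (x, y)) = 0 := by
    intro x
    have hcont_xy : Continuous (fun y : ℝ => (x, y)) := continuous_const.prodMk continuous_id
    have hsliceo : IsOpen {y : ℝ | (x, y) ∈ Ω} := hΩ.preimage hcont_xy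
    have hsliceb : Bornology.IsBounded {y : ℝ | (x, y) ∈ Ω} := by
      obtain ⟨R, hR⟩ := hb.subset_closedBall 0
      refine (Metric.isBounded_closedBall (x := (0:ℝ)) (r := R)).subset ?_
      intro y hy
      have h1 := hR hy
      rw [Metric.mem_closedBall] at h1 ⊢
      have h2 : dist y (0:ℝ) ≤ dist ((x, y)) ((0 : ℝ × ℝ)) := by
        rw [Prod.dist_eq]; exact le_max_right _ _
      exact h2.trans h1
    have hfr : ∀ y ∈ frontier {y : ℝ | (x, y) ∈ Ω}, g (x, y) = 0 := fun y hyf =>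
      hv _ (hcont_xy.frontier_preimage_subset Ω hyf)
    have h0 := oneD _ hsliceo hsliceb (fun y => g (x, y)) (fun y => g₁ (x, y)) (hd x)
      (hc.comp hcont_xy) hfr
    have heq : (fun y : ℝ => Ω.indicator g₁ (x, y)) =
        fun y : ℝ => ({y : ℝ | (x, y) ∈ Ω}).indicator (fun y => g₁ (x, y)) y := by
      funext y
      rfl
    rw [heq, integral_indicator hsliceo.measurableSet]
    exact h0
  exact MeasureTheory.integral_eq_zero_of_ae (Filter.Eventually.of_forall fun y => hinner y)

lemma efun_cont (k : ℤ × ℤ) : Continuous (efun k) :=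
  Complex.continuous_exp.comp (continuous_const.mul (Complex.continuous_ofReal.comp
    (((continuous_const.mul continuous_fst).add (continuous_const.mul continuous_snd)))))

lemma efun_hasDerivAt_fst (k : ℤ × ℤ) (y x : ℝ) :
    HasDerivAt (fun x => efun k (x, y)) (2 * Real.pi * Complex.I * (k.1 : ℂ) * efun k (x, y)) x := by
  have h1 : HasDerivAt (fun x : ℝ => (k.1 : ℝ) * x + (k.2 : ℝ) * y) (k.1 : ℝ) x := by
    simpa using ((hasDerivAt_id x).const_mul (k.1 : ℝ)).add_const ((k.2 : ℝ) * y)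
  have h2 := ((h1.ofReal_comp).const_mul (2 * Real.pi * Complex.I)).cexp
  convert h2 using 1
  simp only [efun]
  simp only [efun]
  push_cast
  ring

lemma efun_hasDerivAt_snd (k : ℤ × ℤ) (x y : ℝ) :
    HasDerivAt (fun y => efun k (x, y)) (2 * Real.pi * Complex.I * (k.2 : ℂ) * efun k (x, y)) y := by
  have h1 : HasDerivAt (fun y : ℝ => (k.1 : ℝ) * x + (k.2 : ℝ) * y) (k.2 : ℝ) y := by
    simpa using (((hasDerivAt_id y).const_mul (k.2 : ℝ)).const_add ((k.1 : ℝ) * x))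
  have h2 := ((h1.ofReal_comp).const_mul (2 * Real.pi * Complex.I)).cexp
  convert h2 using 1
  simp only [efun]
  simp only [efun]
  push_cast
  ring

lemma efun_add (j n : ℤ × ℤ) (r : ℝ × ℝ) : efun (j + n) r = efun j r * efun n r := by
  simp only [efun, ← Complex.exp_add]
  congr 1
  simp only [Prod.fst_add, Prod.snd_add]
  push_cast
  ring

lemma two_pi_I_ne : (2 * Real.pi * Complex.I : ℂ) ≠ 0 := by
  simp [Real.pi_ne_zero, Complex.I_ne_zero, Complex.ofReal_ne_zero]

lemma helper_fst (Λ0 : Finset (ℤ × ℤ)) (c : ℤ × ℤ → ℂ) (Ω₀ : Set (ℝ × ℝ)) (hΩo : IsOpen Ω₀)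
    (hΩb : Bornology.IsBounded Ω₀)
    (hfr : ∀ r ∈ frontier Ω₀, (∑ k ∈ Λ0, c k * efun k r) = 0) (n : ℤ × ℤ) :
    ∑ j ∈ Λ0, ((n - j).1 : ℂ) * (∫ r in Ω₀, efun (j - n) r) * c j = 0 := by
  set g : ℝ × ℝ → ℂ := fun r => ∑ j ∈ Λ0, c j * efun (j - n) r with hg
  set g₁ : ℝ × ℝ → ℂ := fun r =>
    ∑ j ∈ Λ0, (c j * (2 * Real.pi * Complex.I * ((j - n).1 : ℂ))) * efun (j - n) r with hg₁
  have hd : ∀ y x, HasDerivAt (fun x => g (x, y)) (g₁ (x, y)) x := by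
    intro y x
    have h := HasDerivAt.fun_sum (u := Λ0) (x := x)
      (fun j _ => ((efun_hasDerivAt_fst (j - n) y x).const_mul (c j)))
    convert h using 1
    · rfl
    exact Finset.sum_congr rfl fun j _ => by ring
  have hcont : Continuous g₁ :=
    continuous_finset_sum _ (fun j _ => continuous_const.mul (efun_cont (j - n)))
  have hv : ∀ r ∈ frontier Ω₀, g r = 0 := by
    intro r hr
    have hgr : g r = (∑ k ∈ Λ0, c k * efun k r) * efun (-n) r := by
      rw [Finset.sum_mul]
      refine Finset.sum_congr rfl (fun j _ => ?_)
      rw [show j - n = j + -n from sub_eq_add_neg j n, efun_add]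
      ring
    rw [hgr, hfr r hr, zero_mul]
  have h0 := twoD_fst Ω₀ hΩo hΩb g g₁ hd hcont hv
  have hie : ∀ d : ℤ × ℤ, IntegrableOn (efun d) Ω₀ := fun d =>
    ((efun_cont d).continuousOn.integrableOn_compact hΩb.isCompact_closure).mono_set
      subset_closure
  have h1 : ∫ r in Ω₀, g₁ r = ∑ j ∈ Λ0,
      (c j * (2 * Real.pi * Complex.I * ((j - n).1 : ℂ))) * ∫ r in Ω₀, efun (j - n) r := by
    rw [hg₁]
    rw [integral_finset_sum Λ0 (fun j _ => (hie (j - n)).const_mul _)]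
    exact Finset.sum_congr rfl fun j _ => integral_const_mul _ _
  have h2 : ∑ j ∈ Λ0, (c j * (2 * Real.pi * Complex.I * ((j - n).1 : ℂ)))
      * (∫ r in Ω₀, efun (j - n) r) = 0 := by rw [← h1, h0]
  have h3 : ∑ j ∈ Λ0, ((n - j).1 : ℂ) * (∫ r in Ω₀, efun (j - n) r) * c j =
      (-(2 * Real.pi * Complex.I)⁻¹) * ∑ j ∈ Λ0,
        (c j * (2 * Real.pi * Complex.I * ((j - n).1 : ℂ))) * ∫ r in Ω₀, efun (j - n) r := by
    rw [Finset.mul_sum]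
    refine Finset.sum_congr rfl fun j _ => ?_
    have hcast : ((n - j).1 : ℂ) = -(((j - n).1 : ℂ)) := by
      rw [Prod.fst_sub, Prod.fst_sub]
      push_cast
      ring
    rw [hcast]
    have hcc : (2 * Real.pi * Complex.I)⁻¹ * (2 * Real.pi * Complex.I) = 1 :=
      inv_mul_cancel₀ two_pi_I_ne
    linear_combination (((j - n).1 : ℂ) * (∫ r in Ω₀, efun (j - n) r) * c j) * hcc
  rw [h3, h2, mul_zero]

lemma helper_snd (Λ0 : Finset (ℤ × ℤ)) (c : ℤ × ℤ → ℂ) (Ω₀ : Set (ℝ × ℝ)) (hΩo : IsOpen Ω₀)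
    (hΩb : Bornology.IsBounded Ω₀)
    (hfr : ∀ r ∈ frontier Ω₀, (∑ k ∈ Λ0, c k * efun k r) = 0) (n : ℤ × ℤ) :
    ∑ j ∈ Λ0, ((n - j).2 : ℂ) * (∫ r in Ω₀, efun (j - n) r) * c j = 0 := by
  set g : ℝ × ℝ → ℂ := fun r => ∑ j ∈ Λ0, c j * efun (j - n) r with hg
  set g₁ : ℝ × ℝ → ℂ := fun r =>
    ∑ j ∈ Λ0, (c j * (2 * Real.pi * Complex.I * ((j - n).2 : ℂ))) * efun (j - n) r with hg₁
  have hd : ∀ x y, HasDerivAt (fun y => g (x, y)) (g₁ (x, y)) y := by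
    intro x y
    have h := HasDerivAt.fun_sum (u := Λ0) (x := y)
      (fun j _ => ((efun_hasDerivAt_snd (j - n) x y).const_mul (c j)))
    convert h using 1
    · rfl
    exact Finset.sum_congr rfl fun j _ => by ring
  have hcont : Continuous g₁ :=
    continuous_finset_sum _ (fun j _ => continuous_const.mul (efun_cont (j - n)))
  have hv : ∀ r ∈ frontier Ω₀, g r = 0 := by
    intro r hr
    have hgr : g r = (∑ k ∈ Λ0, c k * efun k r) * efun (-n) r := by
      rw [Finset.sum_mul]
      refine Finset.sum_congr rfl (fun j _ => ?_)
      rw [show j - n = j + -n from sub_eq_add_neg j n, efun_add]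
      ring
    rw [hgr, hfr r hr, zero_mul]
  have h0 := twoD_snd Ω₀ hΩo hΩb g g₁ hd hcont hv
  have hie : ∀ d : ℤ × ℤ, IntegrableOn (efun d) Ω₀ := fun d =>
    ((efun_cont d).continuousOn.integrableOn_compact hΩb.isCompact_closure).mono_set
      subset_closure
  have h1 : ∫ r in Ω₀, g₁ r = ∑ j ∈ Λ0,
      (c j * (2 * Real.pi * Complex.I * ((j - n).2 : ℂ))) * ∫ r in Ω₀, efun (j - n) r := by
    rw [hg₁]
    rw [integral_finset_sum Λ0 (fun j _ => (hie (j - n)).const_mul _)]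
    exact Finset.sum_congr rfl fun j _ => integral_const_mul _ _
  have h2 : ∑ j ∈ Λ0, (c j * (2 * Real.pi * Complex.I * ((j - n).2 : ℂ)))
      * (∫ r in Ω₀, efun (j - n) r) = 0 := by rw [← h1, h0]
  have h3 : ∑ j ∈ Λ0, ((n - j).2 : ℂ) * (∫ r in Ω₀, efun (j - n) r) * c j =
      (-(2 * Real.pi * Complex.I)⁻¹) * ∑ j ∈ Λ0,
        (c j * (2 * Real.pi * Complex.I * ((j - n).2 : ℂ))) * ∫ r in Ω₀, efun (j - n) r := by
    rw [Finset.mul_sum]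
    refine Finset.sum_congr rfl fun j _ => ?_
    have hcast : ((n - j).2 : ℂ) = -(((j - n).2 : ℂ)) := by
      rw [Prod.snd_sub, Prod.snd_sub]
      push_cast
      ring
    rw [hcast]
    have hcc : (2 * Real.pi * Complex.I)⁻¹ * (2 * Real.pi * Complex.I) = 1 :=
      inv_mul_cancel₀ two_pi_I_ne
    linear_combination (((j - n).2 : ℂ) * (∫ r in Ω₀, efun (j - n) r) * c j) * hcc
  rw [h3, h2, mul_zero]

end Aux

/-- Every integer shift of the coefficient sequence of the edge-set
polynomial `μ0` that fits inside `Λ1` lies in the nullspace of `T(f̂)`. -/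
theorem shifted_filter_annihilates
    (N : ℕ) (a : Fin N → ℂ) (Ω : Fin N → Set (ℝ × ℝ))
    (hopen : ∀ i, IsOpen (Ω i)) (hbdd : ∀ i, Bornology.IsBounded (Ω i))
    (hsub : ∀ i, Ω i ⊆ Set.Ioo (0 : ℝ) 1 ×ˢ Set.Ioo (0 : ℝ) 1)
    (hdisj : Pairwise (fun i j => Disjoint (Ω i) (Ω j)))
    (hnull : ∀ i, volume (frontier (Ω i)) = 0)
    (Λ0 Λ1 Λ2 : Finset (ℤ × ℤ))
    (hΛ0 : Λ0.Nonempty) (hΛ1 : Λ1.Nonempty) (hΛ2 : Λ2.Nonempty) (hΛ01 : Λ0 ⊆ Λ1)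
    (c : ℤ × ℤ → ℂ) (hcsupp : ∀ k ∉ Λ0, c k = 0) (hc : ∃ k ∈ Λ0, c k ≠ 0)
    (f : ℝ × ℝ → ℂ) (hf : f = fun r => ∑ i, (Ω i).indicator (fun _ => a i) r)
    (hedge : (⋃ i, frontier (Ω i)) ⊆
      {r ∈ square | (∑ k ∈ Λ0, c k * efun k r) = 0}) :
    ∀ m : ℤ × ℤ, (∀ k ∈ Λ0, m + k ∈ Λ1) →
      (Tmat Λ1 Λ2 (fourierCoeff2 f)).mulVec (fun k => c ((k : ℤ × ℤ) - m)) = 0 := by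
  intro m hm
  have hΩsq : ∀ i, Ω i ⊆ square := by
    intro i r hr
    obtain ⟨hr1, hr2⟩ := hsub i hr
    simp only [square, Set.mem_Icc, Prod.le_def]
    exact ⟨⟨hr1.1.le, hr2.1.le⟩, ⟨hr1.2.le, hr2.2.le⟩⟩
  have hsqcompact : IsCompact square := isCompact_Icc
  have hexp : ∀ d : ℤ × ℤ, fourierCoeff2 f d = ∑ i, a i * ∫ r in Ω i, efun (-d) r := by
    intro d
    have hptwise : ∀ r : ℝ × ℝ, f r * efun (-d) r =
        ∑ i, (Ω i).indicator (fun r => a i * efun (-d) r) r := by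
      intro r
      rw [hf]
      simp only [Finset.sum_mul]
      refine Finset.sum_congr rfl fun i _ => ?_
      by_cases hri : r ∈ Ω i <;> simp [Set.indicator_apply, hri]
    have hintegrable : ∀ i : Fin N,
        Integrable ((Ω i).indicator (fun r => a i * efun (-d) r)) (volume.restrict square) := by
      intro i
      have h1 : IntegrableOn (fun r => a i * efun (-d) r) square :=
        ((continuous_const.mul (efun_cont (-d))).continuousOn.integrableOn_compact hsqcompact)
      exact h1.indicator (hopen i).measurableSet
    calc fourierCoeff2 f d
        = ∫ r in square, ∑ i, (Ω i).indicator (fun r => a i * efun (-d) r) r := by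
          unfold fourierCoeff2
          exact integral_congr_ae (Filter.Eventually.of_forall fun r => hptwise r)
      _ = ∑ i, ∫ r in square, (Ω i).indicator (fun r => a i * efun (-d) r) r :=
          integral_finset_sum _ (fun i _ => hintegrable i)
      _ = ∑ i, a i * ∫ r in Ω i, efun (-d) r := by
          refine Finset.sum_congr rfl fun i _ => ?_
          rw [setIntegral_indicator (hopen i).measurableSet,
            Set.inter_eq_right.2 (hΩsq i), integral_const_mul]
  have hfr : ∀ i : Fin N, ∀ r ∈ frontier (Ω i), (∑ k ∈ Λ0, c k * efun k r) = 0 :=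
    fun i r hr => (hedge (Set.mem_iUnion.2 ⟨i, hr⟩)).2
  funext p
  obtain ⟨i2, ℓ⟩ := p
  set n : ℤ × ℤ := (ℓ : ℤ × ℤ) - m with hn
  simp only [Matrix.mulVec, dotProduct, Tmat, Pi.zero_apply]
  rw [Finset.sum_coe_sort Λ1 (fun k =>
    (if i2 = 0 then (((ℓ : ℤ × ℤ) - k).1 : ℂ) else (((ℓ : ℤ × ℤ) - k).2 : ℂ)) *
      fourierCoeff2 f ((ℓ : ℤ × ℤ) - k) * c (k - m))]
  have hS : Λ0.image (fun j => m + j) ⊆ Λ1 := by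
    intro k hk
    obtain ⟨j, hj, rfl⟩ := Finset.mem_image.1 hk
    exact hm j hj
  rw [← Finset.sum_subset hS (by
    intro k hk hknot
    have hkm : k - m ∉ Λ0 := fun hmem =>
      hknot (Finset.mem_image.2 ⟨k - m, hmem, by ring⟩)
    rw [hcsupp _ hkm, mul_zero])]
  rw [Finset.sum_image (fun j _ j' _ h => by exact add_left_cancel h)]
  have hterm : ∀ j ∈ Λ0,
      (if i2 = 0 then (((ℓ : ℤ × ℤ) - (m + j)).1 : ℂ) else (((ℓ : ℤ × ℤ) - (m + j)).2 : ℂ)) *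
        fourierCoeff2 f ((ℓ : ℤ × ℤ) - (m + j)) * c (m + j - m) =
      (if i2 = 0 then ((n - j).1 : ℂ) else ((n - j).2 : ℂ)) *
        fourierCoeff2 f (n - j) * c j := by
    intro j _
    have h1 : (ℓ : ℤ × ℤ) - (m + j) = n - j := by rw [hn]; ring
    have h2 : m + j - m = j := by ring
    rw [h1, h2]
  rw [Finset.sum_congr rfl hterm]
  have hswap : ∀ (w : ℤ × ℤ → ℂ),
      ∑ j ∈ Λ0, w (n - j) * fourierCoeff2 f (n - j) * c j =
      ∑ i, a i * ∑ j ∈ Λ0, w (n - j) * (∫ r in Ω i, efun (j - n) r) * c j := by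
    intro w
    have : ∀ j ∈ Λ0, w (n - j) * fourierCoeff2 f (n - j) * c j =
        ∑ i, a i * (w (n - j) * (∫ r in Ω i, efun (j - n) r) * c j) := by
      intro j _
      rw [hexp (n - j), neg_sub, Finset.mul_sum, Finset.sum_mul]
      refine Finset.sum_congr rfl fun i _ => ?_
      ring
    rw [Finset.sum_congr rfl this, Finset.sum_comm]
    refine Finset.sum_congr rfl fun i _ => ?_
    rw [Finset.mul_sum]
  by_cases h0 : i2 = 0
  · rw [Finset.sum_congr rfl (fun j _ => by rw [if_pos h0] :
      ∀ j ∈ Λ0, (if i2 = 0 then ((n - j).1 : ℂ) else ((n - j).2 : ℂ)) *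
        fourierCoeff2 f (n - j) * c j = ((n - j).1 : ℂ) * fourierCoeff2 f (n - j) * c j)]
    rw [hswap (fun d => (d.1 : ℂ))]
    refine Finset.sum_eq_zero fun i _ => ?_
    rw [helper_fst Λ0 c (Ω i) (hopen i) (hbdd i) (hfr i) n, mul_zero]
  · rw [Finset.sum_congr rfl (fun j _ => by rw [if_neg h0] :
      ∀ j ∈ Λ0, (if i2 = 0 then ((n - j).1 : ℂ) else ((n - j).2 : ℂ)) *
        fourierCoeff2 f (n - j) * c j = ((n - j).2 : ℂ) * fourierCoeff2 f (n - j) * c j)]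
    rw [hswap (fun d => (d.2 : ℂ))]
    refine Finset.sum_eq_zero fun i _ => ?_
    rw [helper_snd Λ0 c (Ω i) (hopen i) (hbdd i) (hfr i) n, mul_zero]
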